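/- arXiv:2602.08848 — 3 statements merged into one kernel-verified Lean document; each statement's English description precedes it below -/
import Mathlib

section
/- Let F = (A, U, I) be a sequential formalism, and let S be a subset of the multi-algebra A that is ↱-closed, closed under the operation (R∘R')∧R'', and such that every algebraically consistent network over S is satisfiable. Then S is algebraically tractable: a network over S is satisfiable iff its algebraic closure is not trivially inconsistent. -/
open scoped Classical

/-- An atom (basic relation) of a Boolean algebra: a nonzero element `b` such that
for every `r`, `r ⊓ b = b` or `r ⊓ b = ⊥`. -/
def IsAtomRel {α : Type*} [BooleanAlgebra α] (b : α) : Prop :=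
  b ≠ ⊥ ∧ ∀ r : α, r ⊓ b = b ∨ r ⊓ b = ⊥

/-- The finset of atoms below `r` (`r ⊆ r'` means `r ⊔ r' = r'`, i.e. `r ≤ r'`). -/
noncomputable def atomsBelow {α : Type*} [BooleanAlgebra α] [Fintype α] (r : α) : Finset α :=
  Finset.univ.filter fun b => IsAtomRel b ∧ b ≤ r

/-- A non-associative relation algebra: a Boolean algebra with composition,
converse and identity satisfying the usual axioms (incl. the Peircean law). -/
structure NA (α : Type*) [BooleanAlgebra α] where
  comp : α → α → α
  conv : α → α
  e : α
  conv_conv : ∀ x, conv (conv x) = x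
  conv_sup : ∀ x y, conv (x ⊔ y) = conv x ⊔ conv y
  conv_comp : ∀ x y, conv (comp x y) = comp (conv y) (conv x)
  comp_e : ∀ x, comp x e = x
  e_comp : ∀ x, comp e x = x
  comp_sup : ∀ x y z, comp x (y ⊔ z) = comp x y ⊔ comp x z
  peirce : ∀ x y z, comp x y ⊓ conv z = ⊥ ↔ comp y z ⊓ conv x = ⊥

/-- Relational composition of sets of pairs. -/
def relComp {U : Type*} (R S : Set (U × U)) : Set (U × U) :=
  {p | ∃ y, (p.1, y) ∈ R ∧ (y, p.2) ∈ S}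

/-- A symmetric qualitative formalism `(A, U, φ)`. -/
structure SQF (α : Type*) [BooleanAlgebra α] [Fintype α] (U : Type*) extends NA α where
  nonempty_univ : Nonempty U
  φ : α → Set (U × U)
  φ_bot : φ ⊥ = ∅
  φ_conv : ∀ r, φ (conv r) = {p | (p.2, p.1) ∈ φ r}
  φ_inf : ∀ r r', φ (r ⊓ r') = φ r ∩ φ r'
  φ_sup : ∀ r r', φ (r ⊔ r') = φ r ∪ φ r'
  φ_comp : ∀ r r', relComp (φ r) (φ r') ∩ φ ⊤ ⊆ φ (comp r r')

/-- A projection operator between two non-associative relation algebras. -/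
structure ProjOp {α β : Type*} [BooleanAlgebra α] [BooleanAlgebra β]
    (A : NA α) (B : NA β) where
  f : α → β
  map_sup : ∀ r r', f (r ⊔ r') = f r ⊔ f r'
  map_conv : ∀ r, f (A.conv r) = B.conv (f r)

/-- A multi-algebra: a family of finite non-associative relation algebras together
with projection operators between any two distinct components. -/
structure MultiAlg (ι : Type*) [Fintype ι] (α : ι → Type*)
    [∀ i, BooleanAlgebra (α i)] [∀ i, Fintype (α i)] where
  na : ∀ i, NA (α i)
  proj : ∀ i j, i ≠ j → α i → α j
  proj_sup : ∀ i j (h : i ≠ j) (r r' : α i),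
    proj i j h (r ⊔ r') = proj i j h r ⊔ proj i j h r'
  proj_conv : ∀ i j (h : i ≠ j) (r : α i),
    proj i j h ((na i).conv r) = (na j).conv (proj i j h r)

namespace MultiAlg

variable {ι : Type*} [Fintype ι] {α : ι → Type*} [∀ i, BooleanAlgebra (α i)]
  [∀ i, Fintype (α i)]

/-- Componentwise composition of multi-algebra relations. -/
def comp (M : MultiAlg ι α) (R R' : ∀ i, α i) : ∀ i, α i :=
  fun i => (M.na i).comp (R i) (R' i)

/-- Componentwise converse of multi-algebra relations. -/
def conv (M : MultiAlg ι α) (R : ∀ i, α i) : ∀ i, α i :=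
  fun i => (M.na i).conv (R i)

/-- A basic relation is a tuple of atoms. -/
def Basic (M : MultiAlg ι α) (R : ∀ i, α i) : Prop := ∀ i, IsAtomRel (R i)

/-- `R` is closed under projection: `Rⱼ ⊆ ↱ⁱʲ(Rᵢ)` for all distinct `i, j`. -/
def RelClosedProj (M : MultiAlg ι α) (R : ∀ i, α i) : Prop :=
  ∀ i j (h : i ≠ j), R j ≤ M.proj i j h (R i)

/-- One pass of the projection-closure iteration: replace each `Rⱼ` by
`Rⱼ ⊓ ↱ⁱʲ(Rᵢ)` for all `i ≠ j`. -/
noncomputable def pstep (M : MultiAlg ι α) (R : ∀ i, α i) : ∀ i, α i :=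
  fun j => R j ⊓ Finset.univ.inf fun i => if h : i ≠ j then M.proj i j h (R i) else ⊤

/-- The projection closure `↱R`, obtained by iterating the refinement step
until a fixed point is reached (reached after at most `card` steps). -/
noncomputable def pcl (M : MultiAlg ι α) (R : ∀ i, α i) : ∀ i, α i :=
  M.pstep^[Fintype.card (∀ i, α i)] R

/-- A relation is `↱`-consistent if it is closed under projection and
not trivially inconsistent. -/
def PConsistent (M : MultiAlg ι α) (R : ∀ i, α i) : Prop :=
  M.RelClosedProj R ∧ ∀ i, R i ≠ ⊥

/-- The inverse projection operator `↰ⁱʲ` of `↱ⁱʲ`, defined on atoms by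
`b ≤ ↰ⁱʲ(b')` iff `b' ≤ ↱ⁱʲ(b)` and extended by union. -/
noncomputable def iproj (M : MultiAlg ι α) (i j : ι) (h : i ≠ j) (r : α j) : α i :=
  (Finset.univ.filter fun b : α i =>
    IsAtomRel b ∧ ∃ b' : α j, IsAtomRel b' ∧ b' ≤ r ∧ b' ≤ M.proj i j h b).sup id

/-- `PathUp M E i j l x y`: following the directed path `l = [i, …, j]` of edges of `E`
upwards, the composite of the direct projections along it maps `x : α i` to `y : α j`. -/
inductive PathUp (M : MultiAlg ι α) (E : ι → ι → Prop) : ∀ i j : ι, List ι → α i → α j → Prop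
  | refl (i : ι) (x : α i) : PathUp M E i i [i] x x
  | step {i j k : ι} {l : List ι} (e : E i j) (h : i ≠ j) (x : α i) {y : α k} :
      PathUp M E j k l (M.proj i j h x) y → PathUp M E i k (i :: l) x y

/-- `PathDown M E i j l x y`: following the path `l = [i, …, j]` downwards along
reversed edges of `E`, the composite of the inverse projections maps `x : α i` to
`y : α j`. -/
inductive PathDown (M : MultiAlg ι α) (E : ι → ι → Prop) : ∀ i j : ι, List ι → α i → α j → Prop
  | refl (i : ι) (x : α i) : PathDown M E i i [i] x x
  | step {i j k : ι} {l : List ι} (e : E j i) (h : j ≠ i) (x : α i) {y : α k} :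
      PathDown M E j k l (M.iproj j i h x) y → PathDown M E i k (i :: l) x y

end MultiAlg

/-- A plenary anti-tree structure on a multi-algebra: an anti-tree (a unique directed
path from every node to the root) on the components such that, along the (unique)
duplicate-free chain `i = k₀ → ⋯ → k_s ← ⋯ ← k_{s+t+1} = j` connecting two distinct
components, the composite of the direct projections going up and of the inverse
projections going down refines the direct projection `↱ⁱʲ` on every atom.
A multi-algebra admitting such a structure is a tree multi-algebra. -/
structure PlenaryAntiTree {ι : Type*} [Fintype ι] {α : ι → Type*}
    [∀ i, BooleanAlgebra (α i)] [∀ i, Fintype (α i)] (M : MultiAlg ι α) where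
  E : ι → ι → Prop
  root : ι
  unique_path : ∀ v : ι, v ≠ root →
    ∃! l : List ι, l.head? = some v ∧ l.getLast? = some root ∧ List.Chain' E l
  plenary : ∀ i j (hij : i ≠ j) (b : α i), IsAtomRel b →
    ∀ (w : ι) (lu ld : List ι) (y : α w) (z : α j),
      MultiAlg.PathUp M E i w lu b y → MultiAlg.PathDown M E w j ld y z →
      (lu ++ ld.tail).Nodup → z ≤ M.proj i j hij b

/-- A sequential formalism `(A, U, I)` over a multi-algebra. -/
structure SeqFormalism (ι : Type*) [Fintype ι] (α : ι → Type*)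
    [∀ i, BooleanAlgebra (α i)] [∀ i, Fintype (α i)] (U : Type*) where
  M : MultiAlg ι α
  I : (∀ i, α i) → Set (U × U)
  I_pcl : ∀ R, I (M.pcl R) = I R
  I_conv : ∀ R, I (M.conv R) = {p | (p.2, p.1) ∈ I R}
  I_bot : I ⊥ = ∅
  I_comp : ∀ R R', relComp (I R) (I R') ∩ I ⊤ ⊆ I (M.comp R R')
  I_inf : ∀ R R', I (R ⊓ R') = I R ∩ I R'
  I_basic : ∀ R, I R = ⋃ B ∈ {B : ∀ i, α i | M.Basic B ∧ B ≤ R}, I B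

section Networks

variable {ι : Type*} [Fintype ι] {α : ι → Type*} [∀ i, BooleanAlgebra (α i)]
  [∀ i, Fintype (α i)] {U : Type*} {V : Type*} [Fintype V]

/-- A network (over variables `V`) is trivially inconsistent if some component of some
constraint between distinct variables is `⊥`. -/
def NetTrivIncons (N : V → V → ∀ i, α i) : Prop := ∃ x y : V, x ≠ y ∧ ∃ i, N x y i = ⊥

/-- A scenario: all constraints between distinct variables are basic. -/
def Scenario (M : MultiAlg ι α) (N : V → V → ∀ i, α i) : Prop :=
  ∀ x y : V, x ≠ y → M.Basic (N x y)

/-- `N` refines `N'`. -/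
def Refines (N N' : V → V → ∀ i, α i) : Prop := ∀ x y : V, x ≠ y → N x y ≤ N' x y

/-- `u` is a solution of the network `N`. -/
def IsSolution (F : SeqFormalism ι α U) (N : V → V → ∀ i, α i) (u : V → U) : Prop :=
  ∀ x y : V, x ≠ y → (u x, u y) ∈ F.I (N x y)

/-- A network is satisfiable if it has a solution. -/
def NetSat (F : SeqFormalism ι α U) (N : V → V → ∀ i, α i) : Prop :=
  ∃ u : V → U, IsSolution F N u

/-- The network is closed under composition. -/
def ClosedComp (M : MultiAlg ι α) (N : V → V → ∀ i, α i) : Prop :=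
  ∀ x y z : V, x ≠ y → y ≠ z → x ≠ z → N x z ≤ M.comp (N x y) (N y z)

/-- The network is closed under projection. -/
def NetClosedProj (M : MultiAlg ι α) (N : V → V → ∀ i, α i) : Prop :=
  ∀ x y : V, x ≠ y → M.RelClosedProj (N x y)

/-- Algebraically closed: closed under composition and projection. -/
def AlgClosed (M : MultiAlg ι α) (N : V → V → ∀ i, α i) : Prop :=
  ClosedComp M N ∧ NetClosedProj M N

/-- Algebraically consistent: algebraically closed and not trivially inconsistent. -/
def AlgConsistent (M : MultiAlg ι α) (N : V → V → ∀ i, α i) : Prop :=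
  AlgClosed M N ∧ ¬ NetTrivIncons N

/-- One pass of the algebraic-closure iteration: close each constraint under projection
and refine it by all compositions `N^{xy} ∘ N^{yz}`. -/
noncomputable def aclStep (M : MultiAlg ι α) (N : V → V → ∀ i, α i) : V → V → ∀ i, α i :=
  fun x z => if x = z then N x z else
    M.pcl (N x z) ⊓ Finset.univ.inf fun y =>
      if x ≠ y ∧ y ≠ z then M.comp (N x y) (N y z) else ⊤

/-- The algebraic closure of a network: iterate the refinement operations until a
fixed point is reached. -/
noncomputable def acl (M : MultiAlg ι α) (N : V → V → ∀ i, α i) : V → V → ∀ i, α i :=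
  (aclStep M)^[Fintype.card (V → V → ∀ i, α i)] N

/-- Closing a network under projection only. -/
noncomputable def netProjClose (M : MultiAlg ι α) (N : V → V → ∀ i, α i) :
    V → V → ∀ i, α i :=
  fun x y => if x = y then N x y else M.pcl (N x y)

/-- One pass of the composition-closure iteration. -/
noncomputable def compStep (M : MultiAlg ι α) (N : V → V → ∀ i, α i) : V → V → ∀ i, α i :=
  fun x z => if x = z then N x z else
    N x z ⊓ Finset.univ.inf fun y =>
      if x ≠ y ∧ y ≠ z then M.comp (N x y) (N y z) else ⊤

/-- Closing a network under composition only. -/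
noncomputable def compClose (M : MultiAlg ι α) (N : V → V → ∀ i, α i) : V → V → ∀ i, α i :=
  (compStep M)^[Fintype.card (V → V → ∀ i, α i)] N

/-- A network over a subset `S` of the multi-algebra. -/
def NetworkOver (S : Set (∀ i, α i)) (N : V → V → ∀ i, α i) : Prop :=
  ∀ x y : V, x ≠ y → N x y ∈ S

end Networks

section Subsets

variable {ι : Type*} [Fintype ι] {α : ι → Type*} [∀ i, BooleanAlgebra (α i)]
  [∀ i, Fintype (α i)] {U : Type*}

/-- `S` is `↱`-closed: the projection closure of any relation of `S` is in `S`. -/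
def PclClosed (M : MultiAlg ι α) (S : Set (∀ i, α i)) : Prop :=
  ∀ R ∈ S, M.pcl R ∈ S

/-- `S` is `∘∧`-closed: `(R ∘ R') ∧ R'' ∈ S` for all `R, R', R'' ∈ S`. -/
def CompInfClosed (M : MultiAlg ι α) (S : Set (∀ i, α i)) : Prop :=
  ∀ R ∈ S, ∀ R' ∈ S, ∀ R'' ∈ S, (M.comp R R') ⊓ R'' ∈ S

/-- `S` is atomizable: every satisfiable relation of `S` contains a satisfiable
basic relation belonging to `S`. -/
def Atomizable (F : SeqFormalism ι α U) (S : Set (∀ i, α i)) : Prop :=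
  ∀ R ∈ S, F.I R ≠ ∅ → ∃ B ∈ S, F.M.Basic B ∧ B ≤ R ∧ F.I B ≠ ∅

/-- `S` is dissociable: closing any network over `S` under projection then under
composition yields a network that is algebraically consistent or trivially
inconsistent. -/
def Dissociable (M : MultiAlg ι α) (S : Set (∀ i, α i)) : Prop :=
  ∀ (V : Type) [Fintype V], ∀ N : V → V → ∀ i, α i, NetworkOver S N →
    AlgConsistent M (compClose M (netProjClose M N)) ∨
      NetTrivIncons (compClose M (netProjClose M N))

/-- `S` is algebraically tractable: a network over `S` is satisfiable iff its
algebraic closure is not trivially inconsistent. -/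
def AlgTractable (F : SeqFormalism ι α U) (S : Set (∀ i, α i)) : Prop :=
  ∀ (V : Type) [Fintype V], ∀ N : V → V → ∀ i, α i, NetworkOver S N →
    (NetSat F N ↔ ¬ NetTrivIncons (acl F.M N))

/-- The `i`-th slice of a subset of a multi-algebra. -/
def sliceSet (S : Set (∀ i, α i)) (i : ι) : Set (α i) := {r | ∃ R ∈ S, R i = r}

end Subsets

section SingleAlgebraNetworks

variable {β : Type*} [BooleanAlgebra β] [Fintype β]

/-- One pass of the (classical, single-algebra) composition-closure iteration. -/
noncomputable def sCompStep {V : Type*} [Fintype V] (na : NA β) (n : V → V → β) :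
    V → V → β :=
  fun x z => if x = z then n x z else
    n x z ⊓ Finset.univ.inf fun y =>
      if x ≠ y ∧ y ≠ z then na.comp (n x y) (n y z) else ⊤

/-- The (classical) algebraic closure of a network over a single algebra. -/
noncomputable def sCompClose {V : Type*} [Fintype V] (na : NA β) (n : V → V → β) :
    V → V → β :=
  (sCompStep na)^[Fintype.card (V → V → β)] n

/-- Closure under composition for a network over a single algebra. -/
def sClosedComp {V : Type*} (na : NA β) (n : V → V → β) : Prop :=
  ∀ x y z : V, x ≠ y → y ≠ z → x ≠ z → n x z ≤ na.comp (n x y) (n y z)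

/-- A classical subclass is minimal: the algebraic closure of any network over it is
the minimal network, i.e. every basic relation contained in a relation of the closure
extends to an algebraically closed scenario refining the closure. -/
def SliceMinimal (na : NA β) (Si : Set β) : Prop :=
  ∀ (V : Type) [Fintype V], ∀ n : V → V → β, (∀ x y : V, x ≠ y → n x y ∈ Si) →
    ∀ x y : V, x ≠ y → ∀ b : β, IsAtomRel b → b ≤ sCompClose na n x y →
      ∃ s : V → V → β, (∀ p q : V, p ≠ q → IsAtomRel (s p q)) ∧
        (∀ p q : V, p ≠ q → s p q ≤ sCompClose na n p q) ∧
        s x y = b ∧ sClosedComp na s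

end SingleAlgebraNetworks
section Aux14

lemma aux14_iter_le {γ : Type*} [Preorder γ] (f : γ → γ) (hf : ∀ x, f x ≤ x)
    (n : ℕ) (x : γ) : f^[n] x ≤ x := by
  induction n generalizing x with
  | zero => exact le_refl x
  | succ n ih =>
    rw [Function.iterate_succ_apply]
    exact (ih (f x)).trans (hf x)

lemma aux14_anti {γ : Type*} [Preorder γ] (f : γ → γ) (hf : ∀ x, f x ≤ x)
    {a b : ℕ} (hab : a ≤ b) (x : γ) : f^[b] x ≤ f^[a] x := by
  obtain ⟨c, rfl⟩ := Nat.exists_eq_add_of_le hab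
  rw [Nat.add_comm, Function.iterate_add_apply]
  exact aux14_iter_le f hf c _

lemma aux14_iterFixed {γ : Type*} [Fintype γ] [PartialOrder γ] (f : γ → γ)
    (hf : ∀ x, f x ≤ x) (x : γ) :
    f (f^[Fintype.card γ] x) = f^[Fintype.card γ] x := by
  obtain ⟨a, b, hne, heq⟩ :=
    Fintype.exists_ne_map_eq_of_card_lt
      (fun k : Fin (Fintype.card γ + 1) => f^[(k : ℕ)] x) (by simp)
  wlog hab : (a : ℕ) < (b : ℕ) generalizing a b
  · exact this b a hne.symm heq.symm
      (lt_of_le_of_ne (not_lt.mp hab) (fun h => hne (Fin.ext h.symm)))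
  have hfix : f (f^[(a : ℕ)] x) = f^[(a : ℕ)] x := by
    have h1 : f^[(a : ℕ) + 1] x ≤ f^[(a : ℕ)] x := aux14_anti f hf (Nat.le_succ _) x
    have h2 : f^[(a : ℕ)] x ≤ f^[(a : ℕ) + 1] x := by
      rw [heq]
      exact aux14_anti f hf (Nat.succ_le_of_lt hab) x
    have := le_antisymm h1 h2
    rwa [Function.iterate_succ_apply' f] at this
  have ha : (a : ℕ) ≤ Fintype.card γ := Nat.lt_succ_iff.mp a.isLt
  have key : f^[Fintype.card γ] x = f^[(a : ℕ)] x := by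
    obtain ⟨c, hc⟩ := Nat.exists_eq_add_of_le ha
    have h3 : f^[Fintype.card γ] x = f^[c] (f^[(a : ℕ)] x) := by
      conv_lhs => rw [hc, Nat.add_comm, Function.iterate_add_apply]
    rw [h3, Function.iterate_fixed hfix]
  rw [key, hfix]

variable {ι : Type*} [Fintype ι] {α : ι → Type*} [∀ i, BooleanAlgebra (α i)]
  [∀ i, Fintype (α i)] {U : Type*}

lemma aux14_pstep_le (M : MultiAlg ι α) (R : ∀ i, α i) : M.pstep R ≤ R :=
  fun j => inf_le_left

lemma aux14_pcl_le (M : MultiAlg ι α) (R : ∀ i, α i) : M.pcl R ≤ R :=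
  aux14_iter_le _ (aux14_pstep_le M) _ R

lemma aux14_pcl_proj (M : MultiAlg ι α) (R : ∀ i, α i) :
    M.RelClosedProj (M.pcl R) := by
  have hfix : M.pstep (M.pcl R) = M.pcl R :=
    aux14_iterFixed M.pstep (aux14_pstep_le M) R
  intro i j h
  have h1 : M.pstep (M.pcl R) j ≤
      (if h' : i ≠ j then M.proj i j h' (M.pcl R i) else ⊤) :=
    inf_le_right.trans (Finset.inf_le (Finset.mem_univ i))
  rw [dif_pos h, hfix] at h1
  exact h1

lemma aux14_I_mono (F : SeqFormalism ι α U) {R R' : ∀ i, α i} (h : R ≤ R') :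
    F.I R ⊆ F.I R' := by
  have h2 : F.I (R ⊓ R') = F.I R ∩ F.I R' := F.I_inf R R'
  rw [inf_eq_left.mpr h] at h2
  intro p hp
  rw [h2] at hp
  exact hp.2

lemma aux14_I_empty (F : SeqFormalism ι α U) {R : ∀ i, α i} (i : ι) (h : R i = ⊥) :
    F.I R = ∅ := by
  rw [F.I_basic]
  apply Set.eq_empty_iff_forall_notMem.mpr
  intro p hp
  simp only [Set.mem_iUnion, Set.mem_setOf_eq] at hp
  obtain ⟨B, ⟨hB, hle⟩, _⟩ := hp
  have : B i ≤ ⊥ := h ▸ hle i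
  exact (hB i).1 (le_bot_iff.mp this)

lemma aux14_mem_I_inf (F : SeqFormalism ι α U) {V' : Type*} (s : Finset V')
    (g : V' → ∀ i, α i) {p : U × U}
    (htop : p ∈ F.I ⊤) (h : ∀ y ∈ s, p ∈ F.I (g y)) : p ∈ F.I (s.inf g) := by
  classical
  induction s using Finset.induction_on with
  | empty => simpa using htop
  | insert _ _ ha ih =>
    rw [Finset.inf_insert, F.I_inf]
    exact ⟨h _ (Finset.mem_insert_self _ _),
      ih fun y hy => h y (Finset.mem_insert_of_mem hy)⟩

variable {V : Type*} [Fintype V]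

lemma aux14_aclStep_le (M : MultiAlg ι α) (N : V → V → ∀ i, α i) :
    aclStep M N ≤ N := by
  intro x
  intro z
  unfold aclStep
  by_cases h : x = z
  · rw [if_pos h]
  · rw [if_neg h]
    exact inf_le_left.trans (aux14_pcl_le M _)

lemma aux14_sol_step (F : SeqFormalism ι α U) (N : V → V → ∀ i, α i) (u : V → U)
    (hu : IsSolution F N u) : IsSolution F (aclStep F.M N) u := by
  intro x z hxz
  have htop : (u x, u z) ∈ F.I ⊤ := aux14_I_mono F le_top (hu x z hxz)
  unfold aclStep
  rw [if_neg hxz, F.I_inf]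
  constructor
  · rw [F.I_pcl]; exact hu x z hxz
  · apply aux14_mem_I_inf F _ _ htop
    intro y _
    by_cases hc : x ≠ y ∧ y ≠ z
    · rw [if_pos hc]
      apply F.I_comp
      exact ⟨⟨u y, hu x y hc.1, hu y z hc.2⟩, htop⟩
    · rw [if_neg hc]; exact htop

lemma aux14_sol_acl (F : SeqFormalism ι α U) (N : V → V → ∀ i, α i) (u : V → U)
    (hu : IsSolution F N u) : IsSolution F (acl F.M N) u := by
  unfold acl
  generalize Fintype.card (V → V → ∀ i, α i) = n
  induction n generalizing N with
  | zero => exact hu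
  | succ n ih =>
    rw [Function.iterate_succ_apply]
    exact ih _ (aux14_sol_step F N u hu)

lemma aux14_over_step (M : MultiAlg ι α) (S : Set (∀ i, α i))
    (hPcl : PclClosed M S) (hCI : CompInfClosed M S)
    (N : V → V → ∀ i, α i) (hN : NetworkOver S N) :
    NetworkOver S (aclStep M N) := by
  intro x z hxz
  unfold aclStep
  rw [if_neg hxz]
  have h0 : M.pcl (N x z) ∈ S := hPcl _ (hN x z hxz)
  have key : ∀ s : Finset V,
      M.pcl (N x z) ⊓ s.inf (fun y =>
        if x ≠ y ∧ y ≠ z then M.comp (N x y) (N y z) else ⊤) ∈ S := by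
    intro s
    induction s using Finset.induction_on with
    | empty => simpa using h0
    | @insert a s ha ih =>
      rw [Finset.inf_insert]
      by_cases hc : x ≠ a ∧ a ≠ z
      · rw [if_pos hc, inf_left_comm]
        exact hCI _ (hN x a hc.1) _ (hN a z hc.2) _ ih
      · rw [if_neg hc, top_inf_eq]
        exact ih
  exact key Finset.univ

lemma aux14_over_acl (M : MultiAlg ι α) (S : Set (∀ i, α i))
    (hPcl : PclClosed M S) (hCI : CompInfClosed M S)
    (N : V → V → ∀ i, α i) (hN : NetworkOver S N) :
    NetworkOver S (acl M N) := by
  unfold acl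
  generalize Fintype.card (V → V → ∀ i, α i) = n
  induction n generalizing N with
  | zero => exact hN
  | succ n ih =>
    rw [Function.iterate_succ_apply]
    exact ih _ (aux14_over_step M S hPcl hCI N hN)

lemma aux14_acl_closed (M : MultiAlg ι α) (N : V → V → ∀ i, α i) :
    AlgClosed M (acl M N) := by
  have hfix : aclStep M (acl M N) = acl M N :=
    aux14_iterFixed (aclStep M) (aux14_aclStep_le M) N
  set N' := acl M N with hN'
  constructor
  · intro x y z hxy hyz hxz
    have hstep := congrFun (congrFun hfix x) z
    unfold aclStep at hstep
    rw [if_neg hxz] at hstep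
    have h1 : N' x z ≤ Finset.univ.inf (fun w =>
        if x ≠ w ∧ w ≠ z then M.comp (N' x w) (N' w z) else ⊤) := by
      exact hstep.symm.le.trans inf_le_right
    have h2 := h1.trans (Finset.inf_le (Finset.mem_univ y))
    rwa [if_pos ⟨hxy, hyz⟩] at h2
  · intro x z hxz
    have hstep := congrFun (congrFun hfix x) z
    unfold aclStep at hstep
    rw [if_neg hxz] at hstep
    have h1 : N' x z ≤ M.pcl (N' x z) := by
      exact hstep.symm.le.trans inf_le_left
    have heq : N' x z = M.pcl (N' x z) :=
      le_antisymm h1 (aux14_pcl_le M _)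
    rw [heq]
    exact aux14_pcl_proj M _

lemma aux14_acl_le (M : MultiAlg ι α) (N : V → V → ∀ i, α i) :
    acl M N ≤ N :=
  aux14_iter_le _ (aux14_aclStep_le M) _ N

end Aux14

/-- a `↱`-closed, `∘∧`-closed subset over which algebraically consistent
networks are satisfiable is algebraically tractable. -/
theorem stmt_14 {ι : Type*} [Fintype ι] {α : ι → Type*} [∀ i, BooleanAlgebra (α i)]
    [∀ i, Fintype (α i)] {U : Type*} (F : SeqFormalism ι α U)
    (S : Set (∀ i, α i))
    (hPcl : PclClosed F.M S)
    (hCI : CompInfClosed F.M S)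
    (hSat : ∀ (V : Type) [Fintype V] (N : V → V → ∀ i, α i),
      NetworkOver S N → AlgConsistent F.M N → NetSat F N) :
    AlgTractable F S := by
  intro V _ N hN
  constructor
  · rintro ⟨u, hu⟩
    have hu' : IsSolution F (acl F.M N) u := aux14_sol_acl F N u hu
    rintro ⟨x, y, hxy, i, hbot⟩
    have := hu' x y hxy
    rw [aux14_I_empty F i hbot] at this
    exact this
  · intro hTriv
    have hOver : NetworkOver S (acl F.M N) := aux14_over_acl F.M S hPcl hCI N hN
    have hClosed : AlgClosed F.M (acl F.M N) := aux14_acl_closed F.M N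
    obtain ⟨u, hu⟩ := hSat V (acl F.M N) hOver ⟨hClosed, hTriv⟩
    exact ⟨u, fun x y hxy => aux14_I_mono F (aux14_acl_le F.M N x y) (hu x y hxy)⟩
end

section
/- Let A be a finite tree multi-algebra with plenary anti-tree structure T, and let B be a basic relation of A. If for all edges k → ℓ of T we have B_ℓ ⊆ ↱ᵏˡ(B_k), then B is closed under projection, i.e., B_j ⊆ ↱ⁱʲ(B_i) for all distinct i, j. -/
open scoped Classical

section Stmt15Aux

variable {ι : Type*} [Fintype ι] {α : ι → Type*} [∀ i, BooleanAlgebra (α i)]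
  [∀ i, Fintype (α i)]

private lemma sublist_pair_split {γ : Type*} {a : γ} :
    ∀ l : List γ, List.Sublist [a, a] l → ∃ l1 l2 l3 : List γ, l = l1 ++ a :: (l2 ++ a :: l3) := by
  intro l h
  induction l with
  | nil => exact absurd (List.eq_nil_of_sublist_nil h) (by simp)
  | cons b t ih =>
    cases h with
    | cons _ h' =>
      obtain ⟨l1, l2, l3, rfl⟩ := ih h'
      exact ⟨b :: l1, l2, l3, rfl⟩
    | cons_cons _ h' =>
      have ha : a ∈ t := List.singleton_sublist.mp h'
      obtain ⟨s, t', rfl⟩ := List.append_of_mem ha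
      exact ⟨[], s, t', rfl⟩

private lemma exists_nodup_chain' {γ : Type*} (E : γ → γ → Prop) :
    ∀ (n : ℕ) (l : List γ), l.length ≤ n → l.Chain' E →
      ∃ l' : List γ, l'.Chain' E ∧ l'.Nodup ∧ l'.head? = l.head? ∧ l'.getLast? = l.getLast? := by
  intro n
  induction n with
  | zero =>
    intro l hl hc
    have : l = [] := List.eq_nil_of_length_eq_zero (Nat.le_zero.mp hl)
    subst this
    exact ⟨[], hc, List.nodup_nil, rfl, rfl⟩
  | succ n ih =>
    intro l hl hc
    by_cases hnd : l.Nodup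
    · exact ⟨l, hc, hnd, rfl, rfl⟩
    · obtain ⟨a, ha⟩ := List.exists_duplicate_iff_not_nodup.mpr hnd
      obtain ⟨l1, l2, l3, rfl⟩ := sublist_pair_split _ (List.duplicate_iff_sublist.mp ha)
      have hc' : List.Chain' E ((l1 ++ (a :: l2)) ++ (a :: l3)) := by simpa using hc
      simp only [List.Chain'] at hc'
      rw [List.isChain_append] at hc'
      obtain ⟨h1, h2, h3⟩ := hc'
      rw [List.isChain_append] at h1
      obtain ⟨h11, _, h13⟩ := h1
      have hch : List.Chain' E (l1 ++ a :: l3) := by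
        simp only [List.Chain']
        rw [List.isChain_append]
        refine ⟨h11, h2, ?_⟩
        intro x hx y hy
        have hy' : a = y := by simpa using hy
        exact hy' ▸ h13 x hx a (by simp)
      have hlen : (l1 ++ a :: l3).length ≤ n := by
        simp only [List.length_append, List.length_cons] at hl ⊢
        omega
      obtain ⟨l', hc'', hnd'', hh'', hl''⟩ := ih (l1 ++ a :: l3) hlen hch
      refine ⟨l', hc'', hnd'', ?_, ?_⟩
      · rw [hh'']; cases l1 <;> simp
      · rw [hl'']
        obtain ⟨c, hcs⟩ := Option.isSome_iff_exists.mp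
          (List.getLast?_isSome.mpr (by simp : (a :: l3) ≠ []))
        conv_rhs => rw [show l1 ++ a :: (l2 ++ a :: l3) = (l1 ++ a :: l2) ++ (a :: l3) by simp]
        rw [List.getLast?_append, List.getLast?_append, hcs]
        simp

private lemma exists_first_mem_split {γ : Type*} (m : List γ) :
    ∀ l : List γ, (∃ x ∈ l, x ∈ m) →
      ∃ l1 w l2, l = l1 ++ w :: l2 ∧ w ∈ m ∧ ∀ x ∈ l1, x ∉ m := by
  classical
  intro l
  induction l with
  | nil => rintro ⟨x, hx, -⟩; simp at hx
  | cons b t ih =>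
    intro hx
    by_cases hb : b ∈ m
    · exact ⟨[], b, t, rfl, hb, by simp⟩
    · obtain ⟨x, hx, hxm⟩ := hx
      have hxt : x ∈ t := by
        rcases List.mem_cons.mp hx with rfl | hh
        · exact absurd hxm hb
        · exact hh
      obtain ⟨l1, w, l2, rfl, hw, hl1⟩ := ih ⟨x, hxt, hxm⟩
      refine ⟨b :: l1, w, l2, rfl, hw, ?_⟩
      intro y hy
      rcases List.mem_cons.mp hy with rfl | hh
      · exact hb
      · exact hl1 y hh

private lemma proj_mono (M : MultiAlg ι α) {i j : ι} (h : i ≠ j) {r r' : α i} (hrr : r ≤ r') :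
    M.proj i j h r ≤ M.proj i j h r' := by
  have : M.proj i j h r' = M.proj i j h r ⊔ M.proj i j h r' := by
    rw [← M.proj_sup, sup_eq_right.mpr hrr]
  rw [this]; exact le_sup_left

private lemma iproj_mono (M : MultiAlg ι α) {i j : ι} (h : i ≠ j) {r r' : α j} (hrr : r ≤ r') :
    M.iproj i j h r ≤ M.iproj i j h r' := by
  apply Finset.sup_mono
  intro b hb
  simp only [Finset.mem_filter, Finset.mem_univ, true_and] at hb ⊢
  obtain ⟨hat, b', hb', hle, hp⟩ := hb
  exact ⟨hat, b', hb', hle.trans hrr, hp⟩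

private lemma atom_le_iproj (M : MultiAlg ι α) {i j : ι} (h : i ≠ j) {b : α i} {b' : α j}
    {r : α j} (hb : IsAtomRel b) (hb' : IsAtomRel b') (hle : b' ≤ r)
    (hp : b' ≤ M.proj i j h b) : b ≤ M.iproj i j h r := by
  have hmem : b ∈ Finset.univ.filter fun c : α i =>
      IsAtomRel c ∧ ∃ c' : α j, IsAtomRel c' ∧ c' ≤ r ∧ c' ≤ M.proj i j h c := by
    simp only [Finset.mem_filter, Finset.mem_univ, true_and]
    exact ⟨hb, b', hb', hle, hp⟩
  exact Finset.le_sup (f := id) hmem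

private lemma up_aux (M : MultiAlg ι α) (E : ι → ι → Prop) (B : ∀ i, α i)
    (h : ∀ k l (hkl : k ≠ l), E k l → B l ≤ M.proj k l hkl (B k)) :
    ∀ (l : List ι) (i w : ι) (x : α i), l.Chain' E → l.Nodup →
      l.head? = some i → l.getLast? = some w → B i ≤ x →
      ∃ y : α w, MultiAlg.PathUp M E i w l x y ∧ B w ≤ y := by
  intro l
  induction l with
  | nil => intro i w x _ _ hh _ _; simp at hh
  | cons a t ih =>
    intro i w x hc hnd hh hlast hBx
    obtain rfl : i = a := by simpa using hh.symm
    cases t with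
    | nil =>
      obtain rfl : i = w := by simpa using hlast
      exact ⟨x, MultiAlg.PathUp.refl i x, hBx⟩
    | cons b t' =>
      have hE : E i b := (List.isChain_cons_cons.mp hc).1
      have hne : i ≠ b := fun e =>
        (List.nodup_cons.mp hnd).1 (by rw [e]; exact List.mem_cons_self)
      have hBb : B b ≤ M.proj i b hne x := le_trans (h i b hne hE) (proj_mono M hne hBx)
      obtain ⟨y, hp, hBy⟩ := ih b w (M.proj i b hne x) (List.isChain_cons_cons.mp hc).2
        (List.Nodup.of_cons hnd) rfl (by simpa using hlast) hBb
      exact ⟨y, MultiAlg.PathUp.step hE hne x hp, hBy⟩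

private lemma down_aux (M : MultiAlg ι α) (E : ι → ι → Prop) (B : ∀ i, α i)
    (hBa : ∀ i, IsAtomRel (B i))
    (h : ∀ k l (hkl : k ≠ l), E k l → B l ≤ M.proj k l hkl (B k)) :
    ∀ (l : List ι) (w j : ι) (x : α w), l.Chain' (fun a b => E b a) → l.Nodup →
      l.head? = some w → l.getLast? = some j → B w ≤ x →
      ∃ z : α j, MultiAlg.PathDown M E w j l x z ∧ B j ≤ z := by
  intro l
  induction l with
  | nil => intro w j x _ _ hh _ _; simp at hh
  | cons a t ih =>
    intro w j x hc hnd hh hlast hBx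
    obtain rfl : w = a := by simpa using hh.symm
    cases t with
    | nil =>
      obtain rfl : w = j := by simpa using hlast
      exact ⟨x, MultiAlg.PathDown.refl w x, hBx⟩
    | cons b t' =>
      have hE : E b w := (List.isChain_cons_cons.mp hc).1
      have hne : b ≠ w := fun e =>
        (List.nodup_cons.mp hnd).1 (by rw [← e]; exact List.mem_cons_self)
      have hBb : B b ≤ M.iproj b w hne x := by
        refine le_trans ?_ (iproj_mono M hne hBx)
        exact atom_le_iproj M hne (hBa b) (hBa w) le_rfl (h b w hne hE)
      obtain ⟨z, hp, hBz⟩ := ih b j (M.iproj b w hne x) (List.isChain_cons_cons.mp hc).2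
        (List.Nodup.of_cons hnd) rfl (by simpa using hlast) hBb
      exact ⟨z, MultiAlg.PathDown.step hE hne x hp, hBz⟩

end Stmt15Aux
/-- in a tree multi-algebra, a basic relation closed under the
projections along the edges of a plenary anti-tree structure is closed under all
projections. -/
theorem stmt_15 {ι : Type*} [Fintype ι] {α : ι → Type*} [∀ i, BooleanAlgebra (α i)]
    [∀ i, Fintype (α i)] (M : MultiAlg ι α) (T : PlenaryAntiTree M)
    (B : ∀ i, α i) (hB : M.Basic B)
    (h : ∀ k l (hkl : k ≠ l), T.E k l → B l ≤ M.proj k l hkl (B k)) :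
    ∀ i j (hij : i ≠ j), B j ≤ M.proj i j hij (B i) := by
  classical
  intro i j hij
  have hpath : ∀ v : ι, ∃ l : List ι, l.Chain' T.E ∧ l.Nodup ∧
      l.head? = some v ∧ l.getLast? = some T.root := by
    intro v
    by_cases hv : v = T.root
    · exact ⟨[v], List.isChain_singleton _, by simp, rfl, by simp [hv]⟩
    · obtain ⟨l, ⟨hh, hl, hc⟩, -⟩ := T.unique_path v hv
      obtain ⟨l', hc', hnd', hh', hl'⟩ := exists_nodup_chain' T.E l.length l le_rfl hc
      exact ⟨l', hc', hnd', hh'.trans hh, hl'.trans hl⟩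
  obtain ⟨Pi, hPic, hPind, hPih, hPil⟩ := hpath i
  obtain ⟨Pj, hPjc, hPjnd, hPjh, hPjl⟩ := hpath j
  have hrootPi : T.root ∈ Pi := List.mem_of_mem_getLast? (by rw [hPil]; rfl)
  have hrootPj : T.root ∈ Pj := List.mem_of_mem_getLast? (by rw [hPjl]; rfl)
  obtain ⟨l1, w, l2, hPieq, hwPj, hl1⟩ :=
    exists_first_mem_split Pj Pi ⟨T.root, hrootPi, hrootPj⟩
  obtain ⟨m1, m2, hPjeq⟩ := List.append_of_mem hwPj
  -- the upward path lu from i to w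
  have hluPre : (l1 ++ [w]) <+: Pi := ⟨l2, by simp [hPieq]⟩
  have hluC : (l1 ++ [w]).Chain' T.E := hPic.prefix hluPre
  have hluN : (l1 ++ [w]).Nodup := hPind.sublist hluPre.sublist
  have hluH : (l1 ++ [w]).head? = some i := by
    rw [hPieq] at hPih; cases l1 <;> simpa using hPih
  have hluL : (l1 ++ [w]).getLast? = some w := List.getLast?_concat
  -- the downward path ld from w to j
  have hmPre : (m1 ++ [w]) <+: Pj := ⟨m2, by simp [hPjeq]⟩
  have hmC : (m1 ++ [w]).Chain' T.E := hPjc.prefix hmPre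
  have hmN : (m1 ++ [w]).Nodup := hPjnd.sublist hmPre.sublist
  have hldeq : (w :: m1.reverse : List ι) = (m1 ++ [w]).reverse := by simp
  have hldC : (w :: m1.reverse).Chain' (fun a b => T.E b a) := by
    rw [hldeq]
    exact List.isChain_reverse.mpr hmC
  have hldN : (w :: m1.reverse).Nodup := by rw [hldeq]; exact List.nodup_reverse.mpr hmN
  have hldH : (w :: m1.reverse).head? = some w := rfl
  have hldL : (w :: m1.reverse).getLast? = some j := by
    rw [hldeq, List.getLast?_reverse]
    rw [hPjeq] at hPjh; cases m1 <;> simpa using hPjh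
  -- B is propagated up and then down
  obtain ⟨y, hup, hBy⟩ := up_aux M T.E B h (l1 ++ [w]) i w (B i) hluC hluN hluH hluL le_rfl
  obtain ⟨z, hdown, hBz⟩ :=
    down_aux M T.E B hB h (w :: m1.reverse) w j y hldC hldN hldH hldL hBy
  -- the combined chain has no duplicates
  have hwm1 : w ∉ m1 := by
    have := hPjnd
    rw [hPjeq, List.nodup_append] at this
    exact fun hw => this.2.2 w hw w List.mem_cons_self rfl
  have hnodup : ((l1 ++ [w]) ++ (w :: m1.reverse).tail).Nodup := by
    rw [List.nodup_append]
    refine ⟨hluN, by simpa using List.nodup_reverse.mpr hmN.of_append_left, ?_⟩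
    intro a ha b ha' hab
    subst hab
    have haPj : a ∈ Pj := by
      rw [hPjeq]
      exact List.mem_append_left _ (by simpa using ha')
    rcases List.mem_append.mp ha with ha1 | ha2
    · exact hl1 a ha1 haPj
    · have : a = w := by simpa using ha2
      subst this
      exact hwm1 (by simpa using ha')
  exact le_trans hBz
    (T.plenary i j hij (B i) (hB i) w (l1 ++ [w]) (w :: m1.reverse) y z hup hdown hnodup)
end

section
/- Let A be a tree multi-algebra of a sequential formalism whose basic relations closed under projection are all satisfiable. Then every ↱-consistent relation of A is satisfiable. -/
open scoped Classical

section AuxAtoms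

variable {β : Type*} [BooleanAlgebra β] [Fintype β]

theorem myAtom_le {b r : β} (hb : IsAtomRel b) (h : r ⊓ b ≠ ⊥) : b ≤ r := by
  rcases hb.2 r with h' | h'
  · exact h' ▸ inf_le_left
  · exact absurd h' h

theorem myAtom_exists {r : β} (hr : r ≠ ⊥) : ∃ b, IsAtomRel b ∧ b ≤ r := by
  obtain ⟨m, hm, hmin⟩ : ∃ m ∈ (Finset.univ.filter fun b => b ≠ ⊥ ∧ b ≤ r),
      ∀ x ∈ (Finset.univ.filter fun b => b ≠ ⊥ ∧ b ≤ r), ¬ x < m := by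
    obtain ⟨m, hm⟩ := Finset.exists_minimal
      (s := Finset.univ.filter fun b => b ≠ ⊥ ∧ b ≤ r) ⟨r, by simp [hr]⟩
    exact ⟨m, hm.1, fun x hx hlt => hlt.not_ge (hm.2 hx hlt.le)⟩
  simp only [Finset.mem_filter, Finset.mem_univ, true_and] at hm hmin
  refine ⟨m, ⟨hm.1, fun q => ?_⟩, hm.2⟩
  by_cases h : q ⊓ m = ⊥
  · exact Or.inr h
  · refine Or.inl (le_antisymm inf_le_right ?_)
    have h1 : q ⊓ m ≤ r := le_trans inf_le_right hm.2
    have := hmin _ ⟨h, h1⟩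
    rcases lt_or_eq_of_le (inf_le_right : q ⊓ m ≤ m) with h2 | h2
    · exact absurd h2 this
    · exact le_of_eq h2.symm

theorem myAtomsBelow_nonempty {r : β} (hr : r ≠ ⊥) : (atomsBelow r).Nonempty := by
  obtain ⟨b, hb, hbr⟩ := myAtom_exists hr
  exact ⟨b, by simp [atomsBelow, hb, hbr]⟩

theorem mySup_atoms {r : β} (hr : r ≠ ⊥) :
    r = (atomsBelow r).sup' (myAtomsBelow_nonempty hr) id := by
  set s := (atomsBelow r).sup' (myAtomsBelow_nonempty hr) id with hs
  have hsr : s ≤ r := by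
    refine Finset.sup'_le _ _ fun b hb => ?_
    simp only [atomsBelow, Finset.mem_filter] at hb
    exact hb.2.2
  have hbot : r ⊓ sᶜ = ⊥ := by
    by_contra h
    obtain ⟨b, hb, hble⟩ := myAtom_exists h
    have hbr : b ≤ r := hble.trans inf_le_left
    have hbs : b ≤ s := Finset.le_sup' id (by simp [atomsBelow, hb, hbr])
    have : b ≤ s ⊓ sᶜ := le_inf hbs (hble.trans inf_le_right)
    rw [inf_compl_eq_bot] at this
    exact hb.1 (le_bot_iff.mp this)
  refine le_antisymm ?_ hsr
  have : r = r ⊓ s ⊔ r ⊓ sᶜ := by rw [← inf_sup_left, sup_compl_eq_top, inf_top_eq]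
  calc r = r ⊓ s ⊔ r ⊓ sᶜ := this
    _ ≤ s := by rw [hbot]; simp

theorem myAtom_le_sup' {x : β} {γ : Type*} {t : Finset γ} (ht : t.Nonempty) (f : γ → β)
    (hx : IsAtomRel x) (h : x ≤ t.sup' ht f) : ∃ a ∈ t, x ≤ f a := by
  by_contra hc
  push_neg at hc
  have hp : t.sup' ht f ⊓ x = ⊥ := by
    refine Finset.sup'_induction (p := fun y => y ⊓ x = ⊥) ht f (fun a ha b hb => ?_) (fun b hb => ?_)
    · show (a ⊔ b) ⊓ x = ⊥
      rw [inf_sup_right, ha, hb, sup_idem]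
    · rcases hx.2 (f b) with h' | h'
      · exact absurd (myAtom_le hx (by rw [h']; exact hx.1)) (hc b hb)
      · exact h'
  have : x = ⊥ := by
    have := le_inf h (le_refl x)
    rw [hp] at this
    exact le_bot_iff.mp this
  exact hx.1 this

end AuxAtoms

/-- Generic recursion down a tree given by a parent function with decreasing depth. -/
noncomputable def myTreeRec {ι : Type*} {α : ι → Sort*} (root : ι) (parent : ι → ι)
    (depth : ι → ℕ) (hd : ∀ v, v ≠ root → depth (parent v) < depth v)
    (a0 : ∀ v, α v) (step : ∀ v, v ≠ root → α (parent v) → α v) : ∀ v, α v :=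
  fun v =>
    if hv : v = root then a0 v
    else step v hv (myTreeRec root parent depth hd a0 step (parent v))
  termination_by v => depth v
  decreasing_by exact hd v hv

theorem myTreeRec_root {ι : Type*} {α : ι → Sort*} (root : ι) (parent : ι → ι)
    (depth : ι → ℕ) (hd : ∀ v, v ≠ root → depth (parent v) < depth v)
    (a0 : ∀ v, α v) (step : ∀ v, v ≠ root → α (parent v) → α v) :
    myTreeRec root parent depth hd a0 step root = a0 root := by
  rw [myTreeRec]
  simp

theorem myTreeRec_ne {ι : Type*} {α : ι → Sort*} (root : ι) (parent : ι → ι)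
    (depth : ι → ℕ) (hd : ∀ v, v ≠ root → depth (parent v) < depth v)
    (a0 : ∀ v, α v) (step : ∀ v, v ≠ root → α (parent v) → α v) (v : ι) (hv : v ≠ root) :
    myTreeRec root parent depth hd a0 step v
      = step v hv (myTreeRec root parent depth hd a0 step (parent v)) := by
  rw [myTreeRec]
  simp [hv]

section AuxLists

variable {γ : Type*}

theorem myList_dup_decomp : ∀ (l : List γ), ¬ l.Nodup →
    ∃ (A B C : List γ) (x : γ), l = A ++ x :: B ++ x :: C
  | [], h => absurd List.nodup_nil h
  | a :: l, h => by
    by_cases ha : a ∈ l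
    · obtain ⟨B, C, rfl⟩ := List.append_of_mem ha
      exact ⟨[], B, C, a, rfl⟩
    · have hl : ¬ l.Nodup := fun hn => h (List.nodup_cons.mpr ⟨ha, hn⟩)
      obtain ⟨A, B, C, x, rfl⟩ := myList_dup_decomp l hl
      exact ⟨a :: A, B, C, x, rfl⟩

theorem myChain'_of_decomp {Q : γ → γ → Prop} :
    ∀ (l : List γ), (∀ (A : List γ) (a b : γ) (C : List γ), l = A ++ a :: b :: C → Q a b) →
      l.Chain' Q
  | [], _ => List.isChain_nil
  | [a], _ => List.isChain_singleton a
  | a :: b :: l, h => by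
    unfold List.Chain'
    rw [List.isChain_cons_cons]
    exact ⟨h [] a b l rfl,
      myChain'_of_decomp (b :: l) fun A a' b' C hC => h (a :: A) a' b' C (by rw [hC]; rfl)⟩

end AuxLists

/-- in a sequential formalism over a tree multi-algebra whose basic
relations closed under projection are satisfiable, every `↱`-consistent relation is
satisfiable. -/
theorem stmt_16 {ι : Type*} [Fintype ι] {α : ι → Type*} [∀ i, BooleanAlgebra (α i)]
    [∀ i, Fintype (α i)] {U : Type*} (F : SeqFormalism ι α U)
    (T : PlenaryAntiTree F.M)
    (hBasic : ∀ B : ∀ i, α i, F.M.Basic B → F.M.RelClosedProj B → F.I B ≠ ∅) :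
    ∀ R : ∀ i, α i, F.M.PConsistent R → F.I R ≠ ∅ := by
  intro R hR
  classical
  obtain ⟨hRproj, hRne⟩ := hR
  -- the unique path from each node to the root
  obtain ⟨P, hProot, hPhead, hPlast, hPchain, hPuniq⟩ :
      ∃ P : ι → List ι, P T.root = [T.root] ∧ (∀ v, (P v).head? = some v) ∧
        (∀ v, (P v).getLast? = some T.root) ∧ (∀ v, (P v).Chain' T.E) ∧
        ∀ v, v ≠ T.root → ∀ l : List ι, l.head? = some v → l.getLast? = some T.root →
          l.Chain' T.E → l = P v := by
    refine ⟨fun v => if h : v = T.root then [T.root] else (T.unique_path v h).choose,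
      by simp, ?_, ?_, ?_, ?_⟩
    · intro v
      by_cases h : v = T.root
      · subst h; simp
      · simp only [dif_neg h]; exact (T.unique_path v h).choose_spec.1.1
    · intro v
      by_cases h : v = T.root
      · subst h; simp
      · simp only [dif_neg h]; exact (T.unique_path v h).choose_spec.1.2.1
    · intro v
      by_cases h : v = T.root
      · subst h; simp; exact List.isChain_singleton _
      · simp only [dif_neg h]; exact (T.unique_path v h).choose_spec.1.2.2
    · intro v hv l h1 h2 h3
      simp only [dif_neg hv]
      exact (T.unique_path v hv).choose_spec.2 l ⟨h1, h2, h3⟩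
  have hPne : ∀ v, P v ≠ [] := by
    intro v h
    have := hPhead v
    rw [h] at this
    simp at this
  -- every node's path has a second element, its parent
  have hparent_ex : ∀ v : ι, ∃ p : ι, v ≠ T.root → T.E v p ∧ ∃ rest, P v = v :: p :: rest := by
    intro v
    by_cases hv : v = T.root
    · exact ⟨T.root, fun h => absurd hv h⟩
    · have h1 := hPhead v
      have h2 := hPlast v
      have h3 := hPchain v
      match hP : P v with
      | [] => rw [hP] at h1; simp at h1
      | [a] =>
        rw [hP] at h1 h2
        simp at h1 h2
        exact absurd (h1.symm.trans h2) hv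
      | a :: c :: rest =>
        rw [hP] at h1 h3
        simp only [List.head?_cons, Option.some_inj] at h1
        subst h1
        exact ⟨c, fun _ => ⟨(List.isChain_cons_cons.mp h3).1, rest, rfl⟩⟩
  choose parent hparent using hparent_ex
  -- suffixes of paths are paths
  have hPsuffix : ∀ (v : ι) (A : List ι) (u : ι) (C : List ι),
      P v = A ++ u :: C → u ≠ T.root → P u = u :: C := by
    intro v A u C hPv hu
    have h2 := hPlast v
    rw [hPv, List.getLast?_append] at h2
    have hx : (u :: C).getLast? = some ((u :: C).getLast (by simp)) :=
      List.getLast?_eq_getLast _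
    rw [hx] at h2
    simp only [Option.or, Option.some_inj] at h2
    refine (hPuniq u hu (u :: C) (by simp) ?_ ?_).symm
    · rw [hx, h2]
    · exact (hPchain v).suffix ⟨A, hPv.symm⟩
  -- paths have no duplicates
  have hPnodup : ∀ v, (P v).Nodup := by
    intro v
    by_cases hv : v = T.root
    · subst hv; rw [hProot]; simp
    by_contra hnd
    obtain ⟨A, B, C, x, hd⟩ := myList_dup_decomp (P v) hnd
    have hlast : (x :: C).getLast? = some T.root := by
      have h2 := hPlast v
      rw [hd, List.getLast?_append] at h2
      have hx : (x :: C).getLast? = some ((x :: C).getLast (by simp)) :=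
        List.getLast?_eq_getLast _
      rw [hx] at h2
      simp only [Option.or, Option.some_inj] at h2
      rw [hx, h2]
    have hchainA : (A ++ x :: C).Chain' T.E := by
      have hc := hPchain v
      unfold List.Chain' at hc ⊢
      rw [hd, List.isChain_append] at hc
      obtain ⟨hc1, hc2, hc3⟩ := hc
      rw [List.isChain_append] at hc1
      obtain ⟨hcA, hcxB, hcglue⟩ := hc1
      rw [List.isChain_append]
      refine ⟨hcA, hc2, ?_⟩
      intro a ha y hy
      refine hcglue a ha y ?_
      simp only [List.head?_cons, Option.mem_def, Option.some_inj] at hy ⊢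
      exact hy
    have hhead : (A ++ x :: C).head? = some v := by
      have h1 := hPhead v
      rw [hd] at h1
      cases A with
      | nil => simpa using h1
      | cons a A' => simpa using h1
    have hlast2 : (A ++ x :: C).getLast? = some T.root := by
      rw [List.getLast?_append, hlast]
      simp [Option.or]
    have heq := hPuniq v hv (A ++ x :: C) hhead hlast2 hchainA
    have hlen : (A ++ x :: C).length = (P v).length := by rw [heq]
    rw [hd] at hlen
    simp only [List.length_append, List.length_cons] at hlen
    omega
  -- the root occurs only at the end of a path
  have hrootend : ∀ (v : ι) (A : List ι) (x : ι) (C : List ι),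
      P v = A ++ x :: C → x = T.root → C = [] := by
    intro v A x C hPv hx
    by_contra hC
    have hnd := hPnodup v
    rw [hPv] at hnd
    have hnd2 : (x :: C).Nodup := hnd.sublist (List.sublist_append_right A _)
    have h2 := hPlast v
    rw [hPv, List.getLast?_append] at h2
    have hlastC : C.getLast? = some (C.getLast hC) := List.getLast?_eq_getLast _
    have h3 : (x :: C).getLast? = C.getLast? := by
      cases C with
      | nil => exact absurd rfl hC
      | cons c C' => exact List.getLast?_cons_cons
    rw [h3, hlastC] at h2
    simp only [Option.or, Option.some_inj] at h2
    have : T.root ∈ C := h2 ▸ List.mem_of_mem_getLast? (by rw [hlastC]; rfl)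
    rw [← hx] at this
    exact (List.nodup_cons.mp hnd2).1 this
  -- v is distinct from its parent
  have hne_parent : ∀ v, v ≠ T.root → v ≠ parent v := by
    intro v hv heq
    obtain ⟨_, rest, hPv⟩ := hparent v hv
    have hnd := hPnodup v
    rw [hPv, ← heq] at hnd
    simp at hnd
  -- depth decreases along the parent map
  have hdec : ∀ v, v ≠ T.root → (P (parent v)).length < (P v).length := by
    intro v hv
    obtain ⟨_, rest, hPv⟩ := hparent v hv
    by_cases hp : parent v = T.root
    · rw [hp, hProot, hPv]
      simp
    · have hsfx := hPsuffix v [v] (parent v) rest (by rw [hPv]; rfl) hp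
      rw [hsfx, hPv]
      simp
  -- choice of atoms
  have hRa : ∀ i, ∃ b, IsAtomRel b ∧ b ≤ R i := fun i => myAtom_exists (hRne i)
  choose a0 ha0 using hRa
  have hproj_exists : ∀ v (hv : v ≠ T.root) (x : α (parent v)),
      ∃ bb : α v, (IsAtomRel bb ∧ bb ≤ R v) ∧
        ((IsAtomRel x ∧ x ≤ R (parent v)) →
          x ≤ F.M.proj v (parent v) (hne_parent v hv) bb) := by
    intro v hv x
    by_cases hx : IsAtomRel x ∧ x ≤ R (parent v)
    · have hxle : x ≤ F.M.proj v (parent v) (hne_parent v hv) (R v) :=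
        le_trans hx.2 (hRproj v (parent v) (hne_parent v hv))
      have hsup := mySup_atoms (hRne v)
      set f : SupHom (α v) (α (parent v)) :=
        ⟨F.M.proj v (parent v) (hne_parent v hv), F.M.proj_sup v (parent v) (hne_parent v hv)⟩
        with hf
      have hmapsup : F.M.proj v (parent v) (hne_parent v hv) (R v)
          = (atomsBelow (R v)).sup' (myAtomsBelow_nonempty (hRne v)) (f ∘ id) := by
        conv_lhs => rw [hsup]
        exact map_finset_sup' f _ id
      rw [hmapsup] at hxle
      obtain ⟨a, ha, hxa⟩ := myAtom_le_sup' _ _ hx.1 hxle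
      simp only [atomsBelow, Finset.mem_filter, Finset.mem_univ, true_and] at ha
      exact ⟨a, ⟨ha.1, ha.2⟩, fun _ => hxa⟩
    · exact ⟨a0 v, ha0 v, fun h => absurd h hx⟩
  choose step hstep using hproj_exists
  -- construct the basic relation by recursion down the tree
  obtain ⟨b, hbinv, hedge⟩ :
      ∃ b : ∀ v, α v, (∀ v, IsAtomRel (b v) ∧ b v ≤ R v) ∧
        ∀ v (hv : v ≠ T.root),
          b (parent v) ≤ F.M.proj v (parent v) (hne_parent v hv) (b v) := by
    refine ⟨myTreeRec T.root parent (fun v => (P v).length) hdec a0 step, ?_, ?_⟩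
    · intro v
      by_cases hv : v = T.root
      · subst hv
        rw [myTreeRec_root]
        exact ha0 T.root
      · rw [myTreeRec_ne _ _ _ _ _ _ v hv]
        exact (hstep v hv _).1
    · intro v hv
      have hpinv : IsAtomRel (myTreeRec T.root parent (fun v => (P v).length) hdec a0 step
            (parent v)) ∧
          myTreeRec T.root parent (fun v => (P v).length) hdec a0 step (parent v)
            ≤ R (parent v) := by
        by_cases hp : parent v = T.root
        · rw [hp, myTreeRec_root]; exact ha0 T.root
        · rw [myTreeRec_ne _ _ _ _ _ _ _ hp]; exact (hstep (parent v) hp _).1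
      conv_rhs => rw [myTreeRec_ne _ _ _ _ _ _ v hv]
      exact (hstep v hv _).2 hpinv
  have hbatom : ∀ v, IsAtomRel (b v) := fun v => (hbinv v).1
  -- the edge condition holds along every path
  have hQ : ∀ v, (P v).Chain' (fun c p => ∀ h : c ≠ p, b p ≤ F.M.proj c p h (b c)) := by
    intro v
    refine myChain'_of_decomp _ ?_
    intro A c p C hd h
    have hc : c ≠ T.root := by
      intro hc
      have := hrootend v A c (p :: C) hd hc
      simp at this
    have hsfx := hPsuffix v A c (p :: C) hd hc
    obtain ⟨_, rest, hPc⟩ := hparent c hc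
    rw [hPc] at hsfx
    have hp : p = parent c := by
      have h' := hsfx.symm
      simp only [List.cons.injEq] at h'
      exact h'.2.1
    subst hp
    exact hedge c hc
  -- monotonicity of projections
  have hmono : ∀ i j (h : i ≠ j) (x y : α i), x ≤ y →
      F.M.proj i j h x ≤ F.M.proj i j h y := by
    intro i j h x y hxy
    have := F.M.proj_sup i j h x y
    rw [sup_eq_right.mpr hxy] at this
    rw [this]
    exact le_sup_left
  -- going up a path
  have hup : ∀ (l : List ι) (i w : ι), l.head? = some i → l.getLast? = some w →
      l.Chain' T.E → l.Chain' (fun c p => ∀ h : c ≠ p, b p ≤ F.M.proj c p h (b c)) →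
      l.Chain' (· ≠ ·) → ∀ x : α i, b i ≤ x →
      ∃ y : α w, b w ≤ y ∧ MultiAlg.PathUp F.M T.E i w l x y := by
    intro l
    induction l with
    | nil => intro i w h1; simp at h1
    | cons a l ih =>
      intro i w h1 h2 h3 h4 h5 x hx
      have hai : i = a := by simpa using h1.symm
      subst hai
      cases l with
      | nil =>
        have hw : i = w := by simpa using h2
        subst hw
        exact ⟨x, hx, MultiAlg.PathUp.refl i x⟩
      | cons c l' =>
        have hE : T.E i c := (List.isChain_cons_cons.mp h3).1
        have hQc := (List.isChain_cons_cons.mp h4).1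
        have hne : i ≠ c := (List.isChain_cons_cons.mp h5).1
        have hx' : b c ≤ F.M.proj i c hne x := le_trans (hQc hne) (hmono i c hne _ _ hx)
        obtain ⟨y, hy, hpath⟩ := ih c w (by simp) (by rw [← h2]; exact List.getLast?_cons_cons.symm)
          (List.isChain_cons_cons.mp h3).2 (List.isChain_cons_cons.mp h4).2 (List.isChain_cons_cons.mp h5).2
          (F.M.proj i c hne x) hx'
        exact ⟨y, hy, MultiAlg.PathUp.step hE hne x hpath⟩
  -- going down a path
  have hdown : ∀ (l : List ι) (w j : ι), l.head? = some w → l.getLast? = some j →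
      l.Chain' (fun a c => T.E c a) →
      l.Chain' (fun p c => ∀ h : c ≠ p, b p ≤ F.M.proj c p h (b c)) →
      l.Chain' (· ≠ ·) → ∀ x : α w, b w ≤ x →
      ∃ z : α j, b j ≤ z ∧ MultiAlg.PathDown F.M T.E w j l x z := by
    intro l
    induction l with
    | nil => intro w j h1; simp at h1
    | cons a l ih =>
      intro w j h1 h2 h3 h4 h5 x hx
      have haw : w = a := by simpa using h1.symm
      subst haw
      cases l with
      | nil =>
        have hj : w = j := by simpa using h2
        subst hj
        exact ⟨x, hx, MultiAlg.PathDown.refl w x⟩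
      | cons c l' =>
        have hE : T.E c w := (List.isChain_cons_cons.mp h3).1
        have hQc := (List.isChain_cons_cons.mp h4).1
        have hne : w ≠ c := (List.isChain_cons_cons.mp h5).1
        have hcw : c ≠ w := hne.symm
        have hx' : b c ≤ F.M.iproj c w hcw x := by
          refine Finset.le_sup (f := id) ?_
          simp only [Finset.mem_filter, Finset.mem_univ, true_and]
          exact ⟨hbatom c, b w, hbatom w, hx, hQc hcw⟩
        obtain ⟨z, hz, hpath⟩ := ih c j (by simp)
          (by rw [← h2]; exact List.getLast?_cons_cons.symm)
          (List.isChain_cons_cons.mp h3).2 (List.isChain_cons_cons.mp h4).2 (List.isChain_cons_cons.mp h5).2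
          (F.M.iproj c w hcw x) hx'
        exact ⟨z, hz, MultiAlg.PathDown.step hE hcw x hpath⟩
  -- the basic relation is closed under projection
  have hsplit : ∀ (l S : List ι), (∃ x ∈ l, x ∈ S) →
      ∃ u w tt, l = u ++ w :: tt ∧ w ∈ S ∧ ∀ x ∈ u, x ∉ S := by
    intro l S
    induction l with
    | nil => simp
    | cons a l ih =>
      intro hex
      by_cases ha : a ∈ S
      · exact ⟨[], a, l, rfl, ha, by simp⟩
      · have hex' : ∃ x ∈ l, x ∈ S := by
          obtain ⟨x, hx, hxS⟩ := hex
          rcases List.mem_cons.mp hx with rfl | h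
          · exact absurd hxS ha
          · exact ⟨x, h, hxS⟩
        obtain ⟨u, w, tt, hl, hw, hu⟩ := ih hex'
        refine ⟨a :: u, w, tt, by rw [hl]; rfl, hw, ?_⟩
        intro x hx
        rcases List.mem_cons.mp hx with rfl | h
        · exact ha
        · exact hu x h
  have hclosed : ∀ i j (h : i ≠ j), b j ≤ F.M.proj i j h (b i) := by
    intro i j hij
    have hroot_i : T.root ∈ P i := List.mem_of_mem_getLast? (by rw [hPlast i]; rfl)
    have hroot_j : T.root ∈ P j := List.mem_of_mem_getLast? (by rw [hPlast j]; rfl)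
    obtain ⟨u, w, tt, hPi0, hw_mem, hu_not⟩ := hsplit (P i) (P j) ⟨T.root, hroot_i, hroot_j⟩
    have hPi : P i = (u ++ [w]) ++ tt := by rw [hPi0]; simp
    -- j side
    obtain ⟨d, e, hPj⟩ := List.append_of_mem hw_mem
    have hPjd : P j = (d ++ [w]) ++ e := by rw [hPj]; simp
    -- properties of lu = u ++ [w]
    have hlu_prefix : (u ++ [w]) <+: P i := ⟨tt, hPi.symm⟩
    have hlu_nodup : (u ++ [w]).Nodup := (hPnodup i).sublist hlu_prefix.sublist
    have hlu_chainE : (u ++ [w]).Chain' T.E := (hPchain i).prefix hlu_prefix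
    have hlu_chainQ := (hQ i).prefix hlu_prefix
    have hlu_ne : (u ++ [w]).Chain' (· ≠ ·) := List.Pairwise.isChain hlu_nodup
    have hlu_head : (u ++ [w]).head? = some i := by
      have h := hPhead i
      rw [hPi, List.head?_append_of_ne_nil _ (by simp)] at h
      exact h
    have hlu_last : (u ++ [w]).getLast? = some w := List.getLast?_concat
    -- properties of d ++ [w], prefix of P j
    have hd_prefix : (d ++ [w]) <+: P j := ⟨e, hPjd.symm⟩
    have hd_nodup : (d ++ [w]).Nodup := (hPnodup j).sublist hd_prefix.sublist
    have hld_rev : (w :: d.reverse) = (d ++ [w]).reverse := by simp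
    have hld_chainE : (w :: d.reverse).Chain' (fun a c => T.E c a) := by
      unfold List.Chain'
      rw [hld_rev, List.isChain_reverse]
      exact (hPchain j).prefix hd_prefix
    have hld_chainQ : (w :: d.reverse).Chain'
        (fun p c => ∀ h : c ≠ p, b p ≤ F.M.proj c p h (b c)) := by
      unfold List.Chain'
      rw [hld_rev, List.isChain_reverse]
      exact (hQ j).prefix hd_prefix
    have hld_nodup : (w :: d.reverse).Nodup := by
      rw [hld_rev]
      exact List.nodup_reverse.mpr hd_nodup
    have hld_ne : (w :: d.reverse).Chain' (· ≠ ·) := List.Pairwise.isChain hld_nodup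
    have hld_head : (w :: d.reverse).head? = some w := rfl
    have hld_last : (w :: d.reverse).getLast? = some j := by
      have h := hPhead j
      rw [hPjd, List.head?_append_of_ne_nil _ (by simp)] at h
      rw [hld_rev, List.getLast?_reverse]
      exact h
    -- the nodup condition for plenarity
    have hw_not_d : w ∉ d := by
      have := hPnodup j
      rw [hPj, List.nodup_append] at this
      exact fun hmem => this.2.2 w hmem w (by simp) rfl
    have hnodup : ((u ++ [w]) ++ (w :: d.reverse).tail).Nodup := by
      rw [List.nodup_append]
      refine ⟨hlu_nodup, by simpa using hd_nodup.sublist (List.sublist_append_left d [w]), ?_⟩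
      intro x hx x' hx' hxx'
      subst hxx'
      simp only [List.tail_cons, List.mem_reverse] at hx'
      rcases List.mem_append.mp hx with hxu | hxw
      · exact hu_not x hxu (by rw [hPj]; exact List.mem_append.mpr (Or.inl hx'))
      · simp only [List.mem_singleton] at hxw
        subst hxw
        exact hw_not_d hx'
    obtain ⟨y, hby, hyp⟩ := hup (u ++ [w]) i w hlu_head hlu_last hlu_chainE hlu_chainQ
      hlu_ne (b i) le_rfl
    obtain ⟨z, hbz, hzp⟩ := hdown (w :: d.reverse) w j hld_head hld_last hld_chainE
      hld_chainQ hld_ne y hby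
    exact le_trans hbz (T.plenary i j hij (b i) (hbatom i) w (u ++ [w]) (w :: d.reverse)
      y z hyp hzp hnodup)
  -- conclude
  have hBs : F.M.Basic b := fun i => (hbinv i).1
  have hle : b ≤ R := fun i => (hbinv i).2
  have hcl : F.M.RelClosedProj b := fun i j h => hclosed i j h
  have hsub : F.I b ⊆ F.I R := by
    rw [F.I_basic R]
    intro x hx
    exact Set.mem_biUnion (show b ∈ {B : ∀ i, α i | F.M.Basic B ∧ B ≤ R} from ⟨hBs, hle⟩) hx
  intro h0
  exact hBasic b hBs hcl (Set.eq_empty_of_subset_empty (h0 ▸ hsub))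
end
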